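/- Let n ≥ 3 be an integer and t > 0 a real number. The function λ ↦ e^{−2λt}·(1 − e^{−λt})^{n−2} on (0, ∞) attains its maximum value uniquely at λ = ln(n/2)/t. -/

import Mathlib

open Real

/-- Core inequality: on `(0,1)`, `u^2 (1-u)^m` is uniquely maximized at `u = 2/(m+2)`. -/
lemma yule_core (m : ℕ) (hm : 1 ≤ m) (u : ℝ) (hu0 : 0 < u) (hu1 : u < 1)
    (hne : u ≠ 2 / ((m : ℝ) + 2)) :
    u ^ 2 * (1 - u) ^ m < (2 / ((m : ℝ) + 2)) ^ 2 * (1 - 2 / ((m : ℝ) + 2)) ^ m := by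
  set N : ℝ := (m : ℝ) + 2 with hNdef
  have hm1 : (1 : ℝ) ≤ (m : ℝ) := by exact_mod_cast hm
  have hmpos : (0 : ℝ) < m := by linarith
  have hNpos : (0 : ℝ) < N := by linarith
  have h1u : 0 < 1 - u := by linarith
  set x : ℝ := N * u / 2 with hxdef
  set y : ℝ := N * (1 - u) / m with hydef
  have hx : 0 < x := by positivity
  have hy : 0 < y := by positivity
  have hxy : x ≠ y := by
    intro h
    apply hne
    rw [hxdef, hydef] at h
    have h' := (div_eq_div_iff (by norm_num : (2:ℝ) ≠ 0) hmpos.ne').1 h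
    rw [eq_div_iff hNpos.ne']
    apply mul_left_cancel₀ hNpos.ne'
    rw [hNdef] at h' ⊢
    linear_combination h'
  have ha : (0 : ℝ) < 2 / N := by positivity
  have hb : (0 : ℝ) < (m : ℝ) / N := by positivity
  have hab : 2 / N + (m : ℝ) / N = 1 := by field_simp [hNdef]; ring
  have key := strictConcaveOn_log_Ioi.2 (Set.mem_Ioi.2 hx) (Set.mem_Ioi.2 hy) hxy ha hb hab
  have hcomb : (2 / N) • x + ((m : ℝ) / N) • y = 1 := by
    simp only [smul_eq_mul, hxdef, hydef]
    field_simp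
    ring
  rw [hcomb, Real.log_one] at key
  simp only [smul_eq_mul] at key
  -- key : 2/N * log x + m/N * log y < 0
  have key' : 2 * Real.log x + (m : ℝ) * Real.log y < 0 := by
    have e1 : 2 / N * Real.log x + (m : ℝ) / N * Real.log y
        = (2 * Real.log x + (m : ℝ) * Real.log y) / N := by ring
    rw [e1] at key
    have := (div_lt_iff₀ hNpos).1 key
    linarith
  have hlx : Real.log x = Real.log N + Real.log u - Real.log 2 := by
    rw [hxdef, Real.log_div (by positivity) (by norm_num),
      Real.log_mul hNpos.ne' hu0.ne']
  have hly : Real.log y = Real.log N + Real.log (1 - u) - Real.log m := by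
    rw [hydef, Real.log_div (by positivity) hmpos.ne',
      Real.log_mul hNpos.ne' h1u.ne']
  rw [hlx, hly] at key'
  -- convert goal to logs
  have hLpos : 0 < u ^ 2 * (1 - u) ^ m := by positivity
  have hu2 : 1 - 2 / N = (m : ℝ) / N := by field_simp [hNdef]; linarith
  rw [hu2]
  rw [← Real.exp_log hLpos, ← Real.exp_log (show (0:ℝ) < (2/N)^2 * ((m:ℝ)/N)^m by positivity)]
  apply Real.exp_lt_exp.2
  rw [Real.log_mul (by positivity) (by positivity),
    Real.log_mul (by positivity) (by positivity),
    Real.log_pow, Real.log_pow, Real.log_pow, Real.log_pow,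
    Real.log_div (by norm_num) hNpos.ne', Real.log_div hmpos.ne' hNpos.ne']
  push_cast
  nlinarith [key']

theorem yule_ML_unique_max (n : ℕ) (hn : 3 ≤ n) (t : ℝ) (ht : 0 < t) :
    Real.log ((n : ℝ) / 2) / t ∈ Set.Ioi (0 : ℝ) ∧
    ∀ l ∈ Set.Ioi (0 : ℝ), l ≠ Real.log ((n : ℝ) / 2) / t →
      Real.exp (-2 * l * t) * (1 - Real.exp (-l * t)) ^ (n - 2) <
        Real.exp (-2 * (Real.log ((n : ℝ) / 2) / t) * t) *
          (1 - Real.exp (-(Real.log ((n : ℝ) / 2) / t) * t)) ^ (n - 2) := by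
  have hn3 : (3 : ℝ) ≤ (n : ℝ) := by exact_mod_cast hn
  have hlogpos : 0 < Real.log ((n : ℝ) / 2) := Real.log_pos (by linarith)
  set l0 : ℝ := Real.log ((n : ℝ) / 2) / t with hl0
  have hm : 1 ≤ n - 2 := by omega
  have hcast : ((n - 2 : ℕ) : ℝ) + 2 = (n : ℝ) := by
    have : n - 2 + 2 = n := by omega
    exact_mod_cast congrArg (Nat.cast : ℕ → ℝ) this
  have hexp0 : Real.exp (-l0 * t) = 2 / (n : ℝ) := by
    have h1 : -l0 * t = -Real.log ((n : ℝ) / 2) := by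
      rw [hl0]; field_simp
    rw [h1, Real.exp_neg, Real.exp_log (by linarith), inv_div]
  constructor
  · exact Set.mem_Ioi.2 (div_pos hlogpos ht)
  · intro l hl hne
    have hl' : 0 < l := Set.mem_Ioi.1 hl
    set u : ℝ := Real.exp (-l * t) with hu
    have hu0 : 0 < u := Real.exp_pos _
    have hu1 : u < 1 := Real.exp_lt_one_iff.2 (by nlinarith)
    have hune : u ≠ 2 / (((n - 2 : ℕ) : ℝ) + 2) := by
      rw [hcast]
      intro h
      apply hne
      have : Real.exp (-l * t) = Real.exp (-l0 * t) := by rw [← hu, h, hexp0]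
      have := Real.exp_eq_exp.1 this
      have ht' : t ≠ 0 := ht.ne'
      exact mul_right_cancel₀ ht' (by linarith)
    have h2 : Real.exp (-2 * l * t) = u ^ 2 := by
      rw [show -2 * l * t = (-l * t) + (-l * t) by ring, Real.exp_add, hu, sq]
    have h2' : Real.exp (-2 * l0 * t) = (2 / (((n - 2 : ℕ) : ℝ) + 2)) ^ 2 := by
      rw [show -2 * l0 * t = (-l0 * t) + (-l0 * t) by ring, Real.exp_add, hexp0, hcast, sq]
    have h3 : Real.exp (-l0 * t) = 2 / (((n - 2 : ℕ) : ℝ) + 2) := by rw [hexp0, hcast]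
    rw [h2, h2', h3]
    exact yule_core (n - 2) hm u hu0 hu1 hune
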